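/- arXiv:2011.00295 — 4 statements merged into one kernel-verified Lean document; each statement's English description precedes it below -/
import Mathlib

section
/- Let F₂ × F₂ be the direct product of two free groups, the first with free generators u₁, v₁ and the second with free generators u₂, v₂. Let f : F₂ × F₂ → ℤ × ℤ be the homomorphism sending u₁ and u₂ to (1,0) and v₁ and v₂ to (0,1). Then the kernel of f equals the subgroup generated by the three elements z₁ = u₁u₂⁻¹, z₂ = v₁v₂⁻¹, and z₃ = [u₁, v₁]. -/
/-- The direct product of two free groups on two generators. -/
abbrev G2 : Type := FreeGroup (Fin 2) × FreeGroup (Fin 2)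

/-- Generator `u₁` of the first factor. -/
def u₁ : G2 := (FreeGroup.of 0, 1)
/-- Generator `v₁` of the first factor. -/
def v₁ : G2 := (FreeGroup.of 1, 1)
/-- Generator `u₂` of the second factor. -/
def u₂ : G2 := (1, FreeGroup.of 0)
/-- Generator `v₂` of the second factor. -/
def v₂ : G2 := (1, FreeGroup.of 1)

/-- The homomorphism `F₂ × F₂ → ℤ × ℤ` sending `u₁, u₂ ↦ (1,0)` and `v₁, v₂ ↦ (0,1)`. -/
def fhom : G2 →* Multiplicative (ℤ × ℤ) :=
  MonoidHom.coprod
    (FreeGroup.lift fun i : Fin 2 =>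
      if i = 0 then Multiplicative.ofAdd ((1, 0) : ℤ × ℤ)
      else Multiplicative.ofAdd ((0, 1) : ℤ × ℤ))
    (FreeGroup.lift fun i : Fin 2 =>
      if i = 0 then Multiplicative.ofAdd ((1, 0) : ℤ × ℤ)
      else Multiplicative.ofAdd ((0, 1) : ℤ × ℤ))

namespace Stmt0Aux

abbrev Fg : Type := FreeGroup (Fin 2)

/-- exponent-sum homomorphism -/
def φ₀ : Fg →* Multiplicative (ℤ × ℤ) :=
  FreeGroup.lift fun i : Fin 2 =>
    if i = 0 then Multiplicative.ofAdd ((1, 0) : ℤ × ℤ)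
    else Multiplicative.ofAdd ((0, 1) : ℤ × ℤ)

/-- generator-inverting endomorphism -/
def ρ₀ : Fg →* Fg := FreeGroup.lift fun i => (FreeGroup.of i)⁻¹

def Sg : Set G2 := {u₁ * u₂⁻¹, v₁ * v₂⁻¹, u₁⁻¹ * v₁⁻¹ * u₁ * v₁}

def H : Subgroup G2 := Subgroup.closure Sg

lemma z1_eq : u₁ * u₂⁻¹ = ((FreeGroup.of 0, (FreeGroup.of 0)⁻¹) : G2) := by
  simp [u₁, u₂, Prod.ext_iff]

lemma z2_eq : v₁ * v₂⁻¹ = ((FreeGroup.of 1, (FreeGroup.of 1)⁻¹) : G2) := by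
  simp [v₁, v₂, Prod.ext_iff]

lemma z3_eq : u₁⁻¹ * v₁⁻¹ * u₁ * v₁ =
    (((FreeGroup.of 0)⁻¹ * (FreeGroup.of 1)⁻¹ * FreeGroup.of 0 * FreeGroup.of 1, 1) : G2) := by
  simp [u₁, v₁, Prod.ext_iff]

lemma z1_mem : u₁ * u₂⁻¹ ∈ H := Subgroup.subset_closure (by simp [Sg])
lemma z2_mem : v₁ * v₂⁻¹ ∈ H := Subgroup.subset_closure (by simp [Sg])
lemma z3_mem : u₁⁻¹ * v₁⁻¹ * u₁ * v₁ ∈ H := Subgroup.subset_closure (by simp [Sg])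

/-- `θA w = (w, ρ₀ w)` -/
def θA : Fg →* G2 := (MonoidHom.id Fg).prod ρ₀

/-- `θB w = (ρ₀ w, w)` -/
def θB : Fg →* G2 := ρ₀.prod (MonoidHom.id Fg)

lemma θA_mem (w : Fg) : θA w ∈ H := by
  induction w using FreeGroup.induction_on with
  | C1 => simpa using H.one_mem
  | of i =>
    fin_cases i
    · show θA (FreeGroup.of 0) ∈ H
      have h : θA (FreeGroup.of 0) = (FreeGroup.of 0, (FreeGroup.of 0)⁻¹) := by
        simp [θA, ρ₀]
      rw [h, ← z1_eq]; exact z1_mem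
    · show θA (FreeGroup.of 1) ∈ H
      have h : θA (FreeGroup.of 1) = (FreeGroup.of 1, (FreeGroup.of 1)⁻¹) := by
        simp [θA, ρ₀]
      rw [h, ← z2_eq]; exact z2_mem
  | inv_of i h => rw [map_inv]; exact H.inv_mem h
  | mul x y hx hy => rw [map_mul]; exact H.mul_mem hx hy

lemma θB_mem (w : Fg) : θB w ∈ H := by
  induction w using FreeGroup.induction_on with
  | C1 => simpa using H.one_mem
  | of i =>
    fin_cases i
    · show θB (FreeGroup.of 0) ∈ H
      have h : θB (FreeGroup.of 0) = (u₁ * u₂⁻¹)⁻¹ := by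
        rw [z1_eq]; simp [θB, ρ₀, Prod.ext_iff]
      rw [h]; exact H.inv_mem z1_mem
    · show θB (FreeGroup.of 1) ∈ H
      have h : θB (FreeGroup.of 1) = (v₁ * v₂⁻¹)⁻¹ := by
        rw [z2_eq]; simp [θB, ρ₀, Prod.ext_iff]
      rw [h]; exact H.inv_mem z2_mem
  | inv_of i h => rw [map_inv]; exact H.inv_mem h
  | mul x y hx hy => rw [map_mul]; exact H.mul_mem hx hy

/-- comap of H under the first-factor inclusion. -/
def N₁ : Subgroup Fg := H.comap (MonoidHom.inl Fg Fg)

instance N₁_normal : N₁.Normal := by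
  constructor
  intro n hn g
  have hmem : ((n, 1) : G2) ∈ H := hn
  have key : ((g * n * g⁻¹, (1 : Fg)) : G2) = θA g * (n, 1) * (θA g)⁻¹ := by
    simp [θA, Prod.ext_iff, mul_assoc]
  show ((g * n * g⁻¹, (1 : Fg)) : G2) ∈ H
  rw [key]
  exact H.mul_mem (H.mul_mem (θA_mem g) hmem) (H.inv_mem (θA_mem g))

lemma c₀_mem : (FreeGroup.of 0)⁻¹ * (FreeGroup.of 1)⁻¹ * FreeGroup.of 0 * FreeGroup.of 1 ∈ N₁ := by
  show (((FreeGroup.of 0)⁻¹ * (FreeGroup.of 1)⁻¹ * FreeGroup.of 0 * FreeGroup.of 1, 1) : G2) ∈ H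
  rw [← z3_eq]; exact z3_mem

abbrev Q : Type := Fg ⧸ N₁

noncomputable def π : Fg →* Q := QuotientGroup.mk' N₁

lemma commute_uv : Commute (π (FreeGroup.of 0)) (π (FreeGroup.of 1)) := by
  have h1 : FreeGroup.of 0 * FreeGroup.of 1 * (FreeGroup.of 0)⁻¹ * (FreeGroup.of 1)⁻¹ =
      (FreeGroup.of 0 * FreeGroup.of 1) *
        ((FreeGroup.of 0)⁻¹ * (FreeGroup.of 1)⁻¹ * FreeGroup.of 0 * FreeGroup.of 1) *
        (FreeGroup.of 0 * FreeGroup.of 1)⁻¹ := by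
    group
  have h2 : FreeGroup.of 0 * FreeGroup.of 1 * (FreeGroup.of 0)⁻¹ * (FreeGroup.of 1)⁻¹ ∈ N₁ := by
    have hc := N₁_normal.conj_mem _ c₀_mem (FreeGroup.of 0 * FreeGroup.of 1)
    simpa [mul_assoc] using hc
  have h3 : π (FreeGroup.of 0 * FreeGroup.of 1 * (FreeGroup.of 0)⁻¹ * (FreeGroup.of 1)⁻¹) = 1 :=
    (QuotientGroup.eq_one_iff _).2 h2
  rw [map_mul, map_mul, map_mul, map_inv, map_inv] at h3
  have h4 : π (FreeGroup.of 0) * π (FreeGroup.of 1) *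
      (π (FreeGroup.of 1) * π (FreeGroup.of 0))⁻¹ = 1 := by
    rw [mul_inv_rev]
    group
    group at h3
    exact h3
  exact mul_inv_eq_one.mp h4

/-- the splitting hom `ℤ² → Q` -/
noncomputable def g : Multiplicative (ℤ × ℤ) →* Q where
  toFun x := π (FreeGroup.of 0) ^ (Multiplicative.toAdd x).1 *
    π (FreeGroup.of 1) ^ (Multiplicative.toAdd x).2
  map_one' := by simp
  map_mul' x y := by
    have hc := commute_uv
    set a := π (FreeGroup.of 0)
    set b := π (FreeGroup.of 1)
    have key : ∀ m n : ℤ, Commute (a ^ m) (b ^ n) := fun m n => hc.zpow_zpow m n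
    show a ^ ((Multiplicative.toAdd x).1 + (Multiplicative.toAdd y).1) *
        b ^ ((Multiplicative.toAdd x).2 + (Multiplicative.toAdd y).2) = _
    rw [zpow_add, zpow_add]
    calc a ^ (Multiplicative.toAdd x).1 * a ^ (Multiplicative.toAdd y).1 *
          (b ^ (Multiplicative.toAdd x).2 * b ^ (Multiplicative.toAdd y).2)
        = a ^ (Multiplicative.toAdd x).1 *
            (a ^ (Multiplicative.toAdd y).1 * b ^ (Multiplicative.toAdd x).2) *
            b ^ (Multiplicative.toAdd y).2 := by
          simp [mul_assoc]
      _ = a ^ (Multiplicative.toAdd x).1 *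
            (b ^ (Multiplicative.toAdd x).2 * a ^ (Multiplicative.toAdd y).1) *
            b ^ (Multiplicative.toAdd y).2 := by
          rw [(key _ _).symm.eq]
      _ = _ := by simp [mul_assoc]

lemma g_comp : g.comp φ₀ = π := by
  apply FreeGroup.ext_hom
  intro i
  fin_cases i <;> simp [g, φ₀]

lemma stepA (w : Fg) (hw : φ₀ w = 1) : ((w, 1) : G2) ∈ H := by
  have h1 : π w = 1 := by
    have := congrArg (fun f : Fg →* Q => f w) g_comp
    simp only [MonoidHom.comp_apply] at this
    rw [← this, hw, map_one]
  have h2 : w ∈ N₁ := (QuotientGroup.eq_one_iff _).1 h1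
  exact h2

lemma φρ (w : Fg) : φ₀ (ρ₀ w) = (φ₀ w)⁻¹ := by
  have h : φ₀.comp ρ₀ = (invMonoidHom : Multiplicative (ℤ × ℤ) →* _).comp φ₀ := by
    apply FreeGroup.ext_hom
    intro i
    simp [φ₀, ρ₀, invMonoidHom]
  have := congrArg (fun f : Fg →* Multiplicative (ℤ × ℤ) => f w) h
  simpa [invMonoidHom] using this

end Stmt0Aux

open Stmt0Aux in
theorem stmt0 :
    fhom.ker =
      Subgroup.closure {u₁ * u₂⁻¹, v₁ * v₂⁻¹, u₁⁻¹ * v₁⁻¹ * u₁ * v₁} := by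
  show fhom.ker = H
  apply le_antisymm
  · intro x hx
    have hker : fhom x = 1 := hx
    have hx2 : φ₀ x.1 * φ₀ x.2 = 1 := by
      simpa [fhom, φ₀, MonoidHom.coprod_apply] using hker
    have hc : φ₀ (x.1 * (ρ₀ x.2)⁻¹) = 1 := by
      rw [map_mul, map_inv, φρ, inv_inv]; exact hx2
    have hmem1 : ((x.1 * (ρ₀ x.2)⁻¹, 1) : G2) ∈ H := stepA _ hc
    have hdec : x = (x.1 * (ρ₀ x.2)⁻¹, 1) * θB x.2 := by
      have hB : θB x.2 = (ρ₀ x.2, x.2) := rfl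
      rw [hB]
      ext <;> simp
    rw [hdec]
    exact H.mul_mem hmem1 (θB_mem x.2)
  · rw [show H = Subgroup.closure Sg from rfl, Subgroup.closure_le]
    intro y hy
    simp only [Sg, Set.mem_insert_iff, Set.mem_singleton_iff] at hy
    have : fhom y = 1 := by
      rcases hy with rfl | rfl | rfl <;>
        simp [fhom, u₁, u₂, v₁, v₂, MonoidHom.coprod_apply, ← ofAdd_add, ← ofAdd_neg,
          Prod.ext_iff]
    exact this
end

section
/- Let F₂ × F₂ be the direct product of two free groups with free generators u₁, v₁ (first factor) and u₂, v₂ (second factor), and let f : F₂ × F₂ → ℤ × ℤ be the homomorphism sending u₁, u₂ to (1,0) and v₁, v₂ to (0,1). Then the kernel of f equals the normal closure in F₂ × F₂ of the two elements z₁ = u₁u₂⁻¹ and z₂ = v₁v₂⁻¹. -/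
theorem stmt1 :
    fhom.ker = Subgroup.normalClosure {u₁ * u₂⁻¹, v₁ * v₂⁻¹} := by
  set N := Subgroup.normalClosure {u₁ * u₂⁻¹, v₁ * v₂⁻¹} with hN
  have hfu₁ : fhom u₁ = Multiplicative.ofAdd ((1, 0) : ℤ × ℤ) := by
    simp [fhom, u₁]
  have hfv₁ : fhom v₁ = Multiplicative.ofAdd ((0, 1) : ℤ × ℤ) := by
    simp [fhom, v₁]
  have hfu₂ : fhom u₂ = Multiplicative.ofAdd ((1, 0) : ℤ × ℤ) := by
    simp [fhom, u₂]
  have hfv₂ : fhom v₂ = Multiplicative.ofAdd ((0, 1) : ℤ × ℤ) := by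
    simp [fhom, v₂]
  have hle : N ≤ fhom.ker := by
    apply Subgroup.normalClosure_le_normal
    intro x hx
    rcases hx with h | h
    · subst h
      simp [MonoidHom.mem_ker, hfu₁, hfu₂]
    · simp only [Set.mem_singleton_iff] at h
      subst h
      simp [MonoidHom.mem_ker, hfv₁, hfv₂]
  -- quotient map
  let q : G2 →* G2 ⧸ N := QuotientGroup.mk' N
  have hq1 : q (u₁ * u₂⁻¹) = 1 := by
    rw [QuotientGroup.mk'_apply, QuotientGroup.eq_one_iff]
    exact Subgroup.subset_normalClosure (Set.mem_insert _ _)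
  have hq2 : q (v₁ * v₂⁻¹) = 1 := by
    rw [QuotientGroup.mk'_apply, QuotientGroup.eq_one_iff]
    exact Subgroup.subset_normalClosure (Set.mem_insert_of_mem _ rfl)
  have hu : q u₁ = q u₂ := by
    have := hq1
    rwa [map_mul, map_inv, mul_inv_eq_one] at this
  have hv : q v₁ = q v₂ := by
    have := hq2
    rwa [map_mul, map_inv, mul_inv_eq_one] at this
  have hcomm : Commute (q u₁) (q v₁) := by
    rw [hu]
    have : u₂ * v₁ = v₁ * u₂ := by
      simp [u₂, v₁, Prod.ext_iff]
    unfold Commute SemiconjBy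
    rw [← map_mul, ← map_mul, this]
  -- section
  let s : Multiplicative (ℤ × ℤ) →* G2 ⧸ N :=
    { toFun := fun x => q u₁ ^ (Multiplicative.toAdd x).1 * q v₁ ^ (Multiplicative.toAdd x).2
      map_one' := by simp
      map_mul' := by
        intro x y
        have h := (hcomm.zpow_zpow (Multiplicative.toAdd y).1
          (Multiplicative.toAdd x).2).eq
        simp only [toAdd_mul, Prod.fst_add, Prod.snd_add, zpow_add]
        rw [mul_assoc, ← mul_assoc (q u₁ ^ (Multiplicative.toAdd y).1), h]
        simp [mul_assoc] }
  have skey : ∀ x : G2, s (fhom x) = q x := by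
    have key : s.comp fhom = q := by
      have hx1 : (s.comp fhom).comp (MonoidHom.inl _ _) = q.comp (MonoidHom.inl _ _) := by
        apply FreeGroup.ext_hom
        intro i
        fin_cases i
        · show s (fhom u₁) = q u₁
          rw [hfu₁]
          show q u₁ ^ (1:ℤ) * q v₁ ^ (0:ℤ) = q u₁
          simp
        · show s (fhom v₁) = q v₁
          rw [hfv₁]
          show q u₁ ^ (0:ℤ) * q v₁ ^ (1:ℤ) = q v₁
          simp
      have hx2 : (s.comp fhom).comp (MonoidHom.inr _ _) = q.comp (MonoidHom.inr _ _) := by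
        apply FreeGroup.ext_hom
        intro i
        fin_cases i
        · show s (fhom u₂) = q u₂
          rw [hfu₂, ← hu]
          show q u₁ ^ (1:ℤ) * q v₁ ^ (0:ℤ) = q u₁
          simp
        · show s (fhom v₂) = q v₂
          rw [hfv₂, ← hv]
          show q u₁ ^ (0:ℤ) * q v₁ ^ (1:ℤ) = q v₁
          simp
      have e1 := fun a => DFunLike.congr_fun hx1 a
      have e2 := fun b => DFunLike.congr_fun hx2 b
      simp only [MonoidHom.comp_apply, MonoidHom.inl_apply, MonoidHom.inr_apply] at e1 e2
      ext x
      have hx' : x = ((x.1, 1) : G2) * (1, x.2) := by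
        simp [Prod.mk_mul_mk]
      rw [MonoidHom.comp_apply, hx', map_mul, map_mul, map_mul, e1, e2]
    exact fun x => DFunLike.congr_fun key x
  apply le_antisymm _ hle
  intro x hx
  have hx1 : fhom x = 1 := hx
  have : q x = 1 := by rw [← skey x, hx1, map_one]
  rwa [QuotientGroup.mk'_apply, QuotientGroup.eq_one_iff] at this
end

section
/- Let 𝔹 be the free Boolean algebra (over ℤ/2, with relations q² = q for every element) on six variables a₁, b₁, a₂, b₂, a₃, b₃. There exist no elements q, r ∈ 𝔹 with r a Boolean polynomial of degree at most 3 such that a₁b₁a₂b₂ + a₁b₁a₃b₃ + a₂b₂a₃b₃ = q·(a₁b₁ + a₂b₂ + a₃b₃) + r. -/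
/-- The linear functional `f ↦ ∑ p, (1 + g p) * f p`, where
`g p = p 0 * p 1 + p 2 * p 3 + p 4 * p 5`. -/
noncomputable def phi6 : ((Fin 6 → ZMod 2) → ZMod 2) →ₗ[ZMod 2] ZMod 2 where
  toFun f := ∑ p : Fin 6 → ZMod 2, (1 + (p 0 * p 1 + p 2 * p 3 + p 4 * p 5)) * f p
  map_add' f g := by
    rw [← Finset.sum_add_distrib]
    exact Finset.sum_congr rfl fun p _ => by simp [mul_add]
  map_smul' c f := by
    simp only [smul_eq_mul, RingHom.id_apply]
    rw [Finset.mul_sum]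
    exact Finset.sum_congr rfl fun p _ => by simp; ring

set_option maxRecDepth 40000 in
lemma phi6_monomial' : ∀ S : Finset (Fin 6), S.card ≤ 3 →
    ∑ p : Fin 6 → ZMod 2, (1 + (p 0 * p 1 + p 2 * p 3 + p 4 * p 5)) * ∏ i ∈ S, p i = 0 := by
  decide

lemma phi6_monomial : ∀ S : Finset (Fin 6), S.card ≤ 3 →
    phi6 (fun p => ∏ i ∈ S, p i) = 0 := fun S hS => phi6_monomial' S hS

set_option maxRecDepth 40000 in
lemma phi6_F' :
    ∑ p : Fin 6 → ZMod 2, (1 + (p 0 * p 1 + p 2 * p 3 + p 4 * p 5)) *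
      (p 0 * p 1 * p 2 * p 3 + p 0 * p 1 * p 4 * p 5 + p 2 * p 3 * p 4 * p 5) = 1 := by
  decide

lemma phi6_F :
    phi6 (fun p : Fin 6 → ZMod 2 =>
      p 0 * p 1 * p 2 * p 3 + p 0 * p 1 * p 4 * p 5 + p 2 * p 3 * p 4 * p 5) = 1 := phi6_F'

/-- In the free Boolean algebra on six variables `a₁ b₁ a₂ b₂ a₃ b₃` (modeled as the
`ℤ/2`-algebra of functions `(ℤ/2)⁶ → ℤ/2`, with the variables the coordinate functions
`p 0, p 1, p 2, p 3, p 4, p 5`), there are no `q`, `r` with `r` of degree at most `3`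
(a `ℤ/2`-linear combination of products of at most 3 distinct variables) such that
`a₁b₁a₂b₂ + a₁b₁a₃b₃ + a₂b₂a₃b₃ = q (a₁b₁ + a₂b₂ + a₃b₃) + r`. -/
theorem stmt6 :
    ¬ ∃ (q r : (Fin 6 → ZMod 2) → ZMod 2),
      r ∈ Submodule.span (ZMod 2)
          {f : (Fin 6 → ZMod 2) → ZMod 2 |
            ∃ S : Finset (Fin 6), S.card ≤ 3 ∧ f = fun p => ∏ i ∈ S, p i} ∧
      (fun p : Fin 6 → ZMod 2 =>
          p 0 * p 1 * p 2 * p 3 + p 0 * p 1 * p 4 * p 5 + p 2 * p 3 * p 4 * p 5) =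
        q * (fun p => p 0 * p 1 + p 2 * p 3 + p 4 * p 5) + r := by
  rintro ⟨q, r, hr, heq⟩
  have hrker : r ∈ LinearMap.ker phi6 := by
    refine Submodule.span_le.mpr ?_ hr
    rintro f ⟨S, hS, rfl⟩
    exact phi6_monomial S hS
  have hqg : phi6 (q * (fun p => p 0 * p 1 + p 2 * p 3 + p 4 * p 5)) = 0 := by
    unfold phi6
    simp only [LinearMap.coe_mk, AddHom.coe_mk, Pi.mul_apply]
    refine Finset.sum_eq_zero fun p _ => ?_
    have h : ∀ x : ZMod 2, (1 + x) * x = 0 := by decide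
    have := h (p 0 * p 1 + p 2 * p 3 + p 4 * p 5)
    calc (1 + (p 0 * p 1 + p 2 * p 3 + p 4 * p 5)) *
          (q p * (p 0 * p 1 + p 2 * p 3 + p 4 * p 5))
        = (1 + (p 0 * p 1 + p 2 * p 3 + p 4 * p 5)) *
          (p 0 * p 1 + p 2 * p 3 + p 4 * p 5) * q p := by ring
      _ = 0 := by rw [this]; ring
  have h1 : phi6 (fun p : Fin 6 → ZMod 2 =>
      p 0 * p 1 * p 2 * p 3 + p 0 * p 1 * p 4 * p 5 + p 2 * p 3 * p 4 * p 5) = 0 := by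
    rw [heq, map_add, hqg, LinearMap.mem_ker.mp hrker, add_zero]
  rw [phi6_F] at h1
  exact one_ne_zero h1
end

section
/- Let V = (ℤ/2)^{2g} with a nondegenerate symplectic form ⟨·,·⟩, and let ω : V → ℤ/2 be an Sp-quadratic function, i.e. ω(x+y) = ω(x) + ω(y) + ⟨x,y⟩ for all x,y. Then the quantity Arf(ω) = Σ_{i=1}^{g} ω(aᵢ)ω(bᵢ) is independent of the choice of symplectic basis a₁,…,a_g, b₁,…,b_g of V. -/
/-- `(ℤ/2)^{2g}` with its standard symplectic structure. -/
abbrev V (g : ℕ) : Type := (Fin g → ZMod 2) × (Fin g → ZMod 2)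

/-- The (nondegenerate) standard symplectic form on `V g`. -/
def B {g : ℕ} (x y : V g) : ZMod 2 := ∑ i, (x.1 i * y.2 i + x.2 i * y.1 i)

/-- `ω` is Sp-quadratic if `ω(x+y) = ω(x) + ω(y) + ⟨x,y⟩`. -/
def IsSpQuadratic {g : ℕ} (ω : V g → ZMod 2) : Prop :=
  ∀ x y : V g, ω (x + y) = ω x + ω y + B x y

/-- `a`, `b` form a symplectic basis of `V g`. -/
def IsSymplecticBasis {g : ℕ} (a b : Fin g → V g) : Prop :=
  (∀ i j, B (a i) (a j) = 0) ∧ (∀ i j, B (b i) (b j) = 0) ∧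
  (∀ i j, B (a i) (b j) = if i = j then 1 else 0) ∧
  LinearIndependent (ZMod 2) (Sum.elim a b) ∧
  Submodule.span (ZMod 2) (Set.range (Sum.elim a b)) = ⊤

/-! ### Auxiliary machinery -/

/-- The sign character `ZMod 2 → ℤ`. -/
def χ (t : ZMod 2) : ℤ := (-1) ^ t.val

lemma chi_add : ∀ s t : ZMod 2, χ (s + t) = χ s * χ t := by decide

lemma chi_zero : χ 0 = 1 := by decide

lemma chi_inj' : ∀ s t : ZMod 2, χ s = χ t → s = t := by decide

lemma chi_inj {s t : ZMod 2} (h : χ s = χ t) : s = t := chi_inj' s t h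

lemma chi_sum {ι : Type*} (s : Finset ι) (f : ι → ZMod 2) :
    χ (∑ i ∈ s, f i) = ∏ i ∈ s, χ (f i) := by
  induction s using Finset.cons_induction with
  | empty => simp [chi_zero]
  | cons j s hj ih => simp [Finset.sum_cons, Finset.prod_cons, chi_add, ih]

lemma two_cases : ∀ c : ZMod 2, c = 0 ∨ c = 1 := by decide

lemma B_add_right {g : ℕ} (x y z : V g) : B x (y + z) = B x y + B x z := by
  simp only [B, Prod.fst_add, Prod.snd_add, Pi.add_apply]
  rw [← Finset.sum_add_distrib]
  exact Finset.sum_congr rfl fun i _ => by ring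

lemma B_add_left {g : ℕ} (x y z : V g) : B (x + y) z = B x z + B y z := by
  simp only [B, Prod.fst_add, Prod.snd_add, Pi.add_apply]
  rw [← Finset.sum_add_distrib]
  exact Finset.sum_congr rfl fun i _ => by ring

lemma B_zero_right {g : ℕ} (x : V g) : B x 0 = 0 := by simp [B]

lemma B_zero_left {g : ℕ} (x : V g) : B 0 x = 0 := by simp [B]

lemma B_comm {g : ℕ} (x y : V g) : B x y = B y x :=
  Finset.sum_congr rfl fun i _ => by ring

lemma B_sum_right {g : ℕ} {ι : Type*} (x : V g) (s : Finset ι) (u : ι → V g) :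
    B x (∑ i ∈ s, u i) = ∑ i ∈ s, B x (u i) := by
  induction s using Finset.cons_induction with
  | empty => simp [B_zero_right]
  | cons j s hj ih => simp [Finset.sum_cons, B_add_right, ih]

lemma omega_zero {g : ℕ} {ω : V g → ZMod 2} (hω : IsSpQuadratic ω) : ω 0 = 0 := by
  have h := hω 0 0
  simp only [add_zero, B_zero_left] at h
  rw [CharTwo.add_self_eq_zero] at h
  exact h

lemma omega_sum_orthogonal {g : ℕ} {ω : V g → ZMod 2} (hω : IsSpQuadratic ω)
    {ι : Type*} (s : Finset ι) (u : ι → V g)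
    (horth : ∀ i ∈ s, ∀ j ∈ s, i ≠ j → B (u i) (u j) = 0) :
    ω (∑ i ∈ s, u i) = ∑ i ∈ s, ω (u i) := by
  induction s using Finset.cons_induction with
  | empty => simp [omega_zero hω]
  | cons j s hj ih =>
    rw [Finset.sum_cons, hω, B_sum_right, Finset.sum_cons]
    have h1 : ∑ i ∈ s, B (u j) (u i) = 0 := by
      apply Finset.sum_eq_zero
      intro i hi
      exact horth j (Finset.mem_cons_self _ _) i (Finset.mem_cons_of_mem hi)
        (fun e => hj (e ▸ hi))
    rw [ih (fun i hi j' hj' => horth i (Finset.mem_cons_of_mem hi) j'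
      (Finset.mem_cons_of_mem hj')), h1, add_zero]

/-- Reindexing equivalence. -/
def ψ (g : ℕ) : (Fin g → (ZMod 2 × ZMod 2)) ≃ ((Fin g ⊕ Fin g) → ZMod 2) where
  toFun p := Sum.elim (fun i => (p i).1) (fun i => (p i).2)
  invFun c i := (c (.inl i), c (.inr i))
  left_inv p := rfl
  right_inv c := by funext s; cases s <;> rfl

lemma factor_sum : ∀ α β : ZMod 2,
    ∑ q : ZMod 2 × ZMod 2, χ (q.1 * α + q.2 * β + q.1 * q.2) = 2 * χ (α * β) := by
  decide

/-- The key: the Gauss sum computes the Arf invariant. -/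
lemma sum_chi {g : ℕ} (ω : V g → ZMod 2) (hω : IsSpQuadratic ω)
    (a b : Fin g → V g) (h : IsSymplecticBasis a b) :
    ∑ v : V g, χ (ω v) = 2 ^ g * χ (∑ i, ω (a i) * ω (b i)) := by
  obtain ⟨haa, hbb, hab, hli, hsp⟩ := h
  set e : Module.Basis (Fin g ⊕ Fin g) (ZMod 2) (V g) := Module.Basis.mk hli hsp.ge with he_def
  have he : ∀ s, e s = Sum.elim a b s := fun s => Module.Basis.mk_apply hli hsp.ge s
  have hea : ∀ i, e (.inl i) = a i := fun i => he _
  have heb : ∀ i, e (.inr i) = b i := fun i => he _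
  -- ω of a single-index block
  have homega1 : ∀ (i : Fin g) (x y : ZMod 2),
      ω (x • a i + y • b i) = x * ω (a i) + y * ω (b i) + x * y := by
    intro i x y
    have hBi : B (a i) (b i) = 1 := by rw [hab]; simp
    rcases two_cases x with hx | hx <;> rcases two_cases y with hy | hy <;>
      subst hx <;> subst hy <;>
      simp [omega_zero hω, hω (a i) (b i), hBi]
  -- orthogonality between distinct single-index blocks
  have horth : ∀ (c : (Fin g ⊕ Fin g) → ZMod 2) (i j : Fin g), i ≠ j →
      B (c (.inl i) • a i + c (.inr i) • b i) (c (.inl j) • a j + c (.inr j) • b j) = 0 := by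
    intro c i j hij
    have h1 : B (a i) (b j) = 0 := by rw [hab]; simp [hij]
    have h2 : B (b i) (a j) = 0 := by rw [B_comm, hab]; simp [Ne.symm hij]
    rcases two_cases (c (.inl i)) with hx | hx <;>
      rcases two_cases (c (.inr i)) with hy | hy <;>
      rcases two_cases (c (.inl j)) with hz | hz <;>
      rcases two_cases (c (.inr j)) with hw | hw <;>
      rw [hx, hy, hz, hw] <;>
      simp [B_add_left, B_add_right, B_zero_left, B_zero_right, haa, hbb, h1, h2, hab]
  -- ω of a general linear combination
  have key : ∀ c : (Fin g ⊕ Fin g) → ZMod 2,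
      ω (e.equivFun.symm c)
        = ∑ i, (c (.inl i) * ω (a i) + c (.inr i) * ω (b i) + c (.inl i) * c (.inr i)) := by
    intro c
    rw [Module.Basis.equivFun_symm_apply]
    have hsplit : ∑ s : Fin g ⊕ Fin g, c s • e s
        = ∑ i, (c (.inl i) • a i + c (.inr i) • b i) := by
      rw [Fintype.sum_sum_type, ← Finset.sum_add_distrib]
      exact Finset.sum_congr rfl fun i _ => by rw [hea, heb]
    rw [hsplit, omega_sum_orthogonal hω _ _ (fun i _ j _ hij => horth c i j hij)]
    exact Finset.sum_congr rfl fun i _ => homega1 i _ _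
  -- rewrite the sum over V as a sum over coordinates
  rw [← Equiv.sum_comp e.equivFun.symm.toEquiv (fun v => χ (ω v))]
  simp only [LinearEquiv.coe_toEquiv]
  have step1 : ∑ c : (Fin g ⊕ Fin g) → ZMod 2, χ (ω (e.equivFun.symm c))
      = ∑ c : (Fin g ⊕ Fin g) → ZMod 2,
          ∏ i, χ (c (.inl i) * ω (a i) + c (.inr i) * ω (b i) + c (.inl i) * c (.inr i)) := by
    exact Finset.sum_congr rfl fun c _ => by rw [key c, chi_sum]
  rw [step1]
  -- reindex to per-index pairs
  rw [← Equiv.sum_comp (ψ g)]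
  have step2 : ∑ p : Fin g → ZMod 2 × ZMod 2,
      ∏ i, χ ((p i).1 * ω (a i) + (p i).2 * ω (b i) + (p i).1 * (p i).2)
      = ∏ i, ∑ q : ZMod 2 × ZMod 2, χ (q.1 * ω (a i) + q.2 * ω (b i) + q.1 * q.2) := by
    rw [Finset.prod_univ_sum]
    rw [← Fintype.piFinset_univ]
  have step2' : (∑ p : Fin g → ZMod 2 × ZMod 2,
      ∏ i, χ ((ψ g p) (.inl i) * ω (a i) + (ψ g p) (.inr i) * ω (b i)
        + (ψ g p) (.inl i) * (ψ g p) (.inr i)))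
      = ∏ i, ∑ q : ZMod 2 × ZMod 2, χ (q.1 * ω (a i) + q.2 * ω (b i) + q.1 * q.2) := by
    rw [← step2]; rfl
  rw [step2']
  have step3 : ∀ i : Fin g, ∑ q : ZMod 2 × ZMod 2,
      χ (q.1 * ω (a i) + q.2 * ω (b i) + q.1 * q.2) = 2 * χ (ω (a i) * ω (b i)) :=
    fun i => factor_sum _ _
  rw [Finset.prod_congr rfl fun i _ => step3 i, Finset.prod_mul_distrib,
    Finset.prod_const, ← chi_sum]
  simp

/-- The Arf invariant `Σ ω(aᵢ)ω(bᵢ)` of an Sp-quadratic function does not depend on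
the choice of symplectic basis. -/
theorem stmt9 (g : ℕ) (ω : V g → ZMod 2) (hω : IsSpQuadratic ω)
    (a b a' b' : Fin g → V g)
    (h : IsSymplecticBasis a b) (h' : IsSymplecticBasis a' b') :
    ∑ i, ω (a i) * ω (b i) = ∑ i, ω (a' i) * ω (b' i) := by
  have h1 := sum_chi ω hω a b h
  have h2 := sum_chi ω hω a' b' h'
  have h3 : (2 : ℤ) ^ g * χ (∑ i, ω (a i) * ω (b i))
      = 2 ^ g * χ (∑ i, ω (a' i) * ω (b' i)) := by rw [← h1, ← h2]
  have h4 := mul_left_cancel₀ (pow_ne_zero g (two_ne_zero : (2:ℤ) ≠ 0)) h3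
  exact chi_inj h4
end
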